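/- Let P be an ergodic row-stochastic matrix on a finite set D reversible with respect to a positive probability distribution π with eigenvalues 1 = β₀ > β₁ ≥ ... ≥ β_{|D|-1} > -1 and orthonormal eigenfunctions u_k in l₂(D,π). For the Markov chain X₁,...,X_n started in the stationary distribution π, the mean squared error of S_n(f) = (1/n)∑_{i=1}^n f(X_i) as an estimator of S(f) = ∑_x f(x)π(x) equals (1/n²)∑_{k=1}^{|D|-1} a_k² W(n,β_k), where a_k = ⟨f,u_k⟩_π and W(n,β) = (n(1−β²) − 2β(1−β^n))/(1−β)². -/

import Mathlib

set_option linter.unusedSectionVars false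
set_option maxHeartbeats 1000000

/-- `W(n,β) = (n(1−β²) − 2β(1−β^n))/(1−β)²`. -/
noncomputable def Wfun (n : ℕ) (x : ℝ) : ℝ :=
  ((n : ℝ) * (1 - x ^ 2) - 2 * x * (1 - x ^ n)) / (1 - x) ^ 2

section Aux

variable {D : Type*} [Fintype D] [DecidableEq D]

lemma geom_dist_sum (β : ℝ) (hβ : β ≠ 1) (n : ℕ) :
    (∑ i : Fin n, ∑ j : Fin n, β ^ Nat.dist i j) = Wfun n β := by
  have hβ' : β - 1 ≠ 0 := sub_ne_zero.mpr hβ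
  have hβ'' : (1:ℝ) - β ≠ 0 := sub_ne_zero.mpr (Ne.symm hβ)
  induction n with
  | zero => simp [Wfun]
  | succ n ih =>
    have hrow : (∑ i : Fin n, β ^ (n - (i:ℕ))) = β * ((β ^ n - 1)/(β - 1)) := by
      rw [Fin.sum_univ_eq_sum_range (fun i => β ^ (n - i)) n]
      have hr := Finset.sum_range_reflect (fun i => β ^ (i+1)) n
      have he : ∀ j ∈ Finset.range n, β ^ (n - 1 - j + 1) = β ^ (n - j) := by
        intro j hj
        rw [Finset.mem_range] at hj
        congr 1; omega
      rw [Finset.sum_congr rfl he] at hr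
      rw [hr, ← geom_sum_eq hβ n, Finset.mul_sum]
      apply Finset.sum_congr rfl
      intro j _; rw [← pow_succ']
    rw [Fin.sum_univ_castSucc (fun i => ∑ j : Fin (n+1), β ^ Nat.dist i j)]
    have h1 : ∀ i : Fin n, (∑ j : Fin (n+1), β ^ Nat.dist (i.castSucc) j)
        = (∑ j : Fin n, β ^ Nat.dist i j) + β ^ (n - (i:ℕ)) := by
      intro i
      rw [Fin.sum_univ_castSucc (fun j => β ^ Nat.dist (i.castSucc) j)]
      congr 1
      simp only [Fin.coe_castSucc, Fin.val_last]
      congr 1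
      exact Nat.dist_eq_sub_of_le i.isLt.le
    have h2 : (∑ j : Fin (n+1), β ^ Nat.dist (Fin.last n) j)
        = (∑ j : Fin n, β ^ (n - (j:ℕ))) + 1 := by
      rw [Fin.sum_univ_castSucc (fun j => β ^ Nat.dist (Fin.last n) j)]
      congr 1
      · apply Finset.sum_congr rfl; intro j _
        simp only [Fin.val_last, Fin.coe_castSucc]
        rw [Nat.dist_comm, Nat.dist_eq_sub_of_le j.isLt.le]
      · simp [Nat.dist_self]
    rw [Finset.sum_congr rfl (fun i _ => h1 i), Finset.sum_add_distrib, h2, ih, hrow]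
    simp only [Wfun]
    push_cast
    field_simp
    ring

lemma sum_path_cons (m : ℕ) (g : (Fin (m+1) → D) → ℝ) :
    ∑ ω : Fin (m+1) → D, g ω = ∑ x : D, ∑ σ : Fin m → D, g (Fin.cons x σ) := by
  calc ∑ ω : Fin (m+1) → D, g ω
      = ∑ p : D × (Fin m → D), g ((Fin.consEquiv (fun _ => D)) p) :=
        ((Fin.consEquiv (fun _ => D)).sum_comp g).symm
    _ = ∑ x : D, ∑ σ : Fin m → D, g (Fin.cons x σ) := Fintype.sum_prod_type _

lemma prod_path_cons (P : Matrix D D ℝ) (m : ℕ) (x : D) (σ : Fin (m+1) → D) :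
    (∏ t : Fin (m+1), P ((Fin.cons x σ : Fin (m+2) → D) t.castSucc)
        ((Fin.cons x σ : Fin (m+2) → D) t.succ))
      = P x (σ 0) * ∏ t : Fin m, P (σ t.castSucc) (σ t.succ) := by
  rw [Fin.prod_univ_succ]
  refine congrArg₂ (· * ·) (by simp) (Finset.prod_congr rfl fun t _ => ?_)
  rw [← Fin.succ_castSucc]
  simp [Fin.cons_succ]

lemma lemC (P : Matrix D D ℝ) (hProw : ∀ x, ∑ y, P x y = 1) :
    ∀ (m : ℕ) (v : D → ℝ) (j : Fin (m+1)) (F : D → D → ℝ),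
    (∑ ω : Fin (m+1) → D,
      (v (ω 0) * ∏ t : Fin m, P (ω t.castSucc) (ω t.succ)) * F (ω 0) (ω j))
    = ∑ x, ∑ y, v x * (P ^ (j:ℕ)) x y * F x y := by
  intro m
  induction m with
  | zero =>
    intro v j F
    have hj : j = 0 := Fin.ext (by omega)
    subst hj
    rw [sum_path_cons 0]
    simp [Matrix.one_apply]
  | succ m ih =>
    intro v j F
    rw [sum_path_cons (m+1)]
    rcases Fin.eq_zero_or_eq_succ j with rfl | ⟨l, rfl⟩
    · have key : ∀ x : D, (∑ σ : Fin (m+1) → D,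
          ((P x) (σ 0) * ∏ t : Fin m, P (σ t.castSucc) (σ t.succ)) * (1:ℝ)) = 1 := by
        intro x
        rw [ih (P x) 0 (fun _ _ => 1)]
        simp [Matrix.one_apply, mul_ite, mul_one, mul_zero, Finset.sum_ite_eq, hProw]
      have lhs_eq : ∀ x : D, (∑ σ : Fin (m+1) → D,
          (v ((Fin.cons x σ : Fin (m+2) → D) 0) *
            ∏ t : Fin (m+1), P ((Fin.cons x σ : Fin (m+2) → D) t.castSucc)
              ((Fin.cons x σ : Fin (m+2) → D) t.succ)) *
            F ((Fin.cons x σ : Fin (m+2) → D) 0) ((Fin.cons x σ : Fin (m+2) → D) 0))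
          = v x * F x x := by
        intro x
        have heq : ∀ σ : Fin (m+1) → D,
            (v ((Fin.cons x σ : Fin (m+2) → D) 0) *
              ∏ t : Fin (m+1), P ((Fin.cons x σ : Fin (m+2) → D) t.castSucc)
                ((Fin.cons x σ : Fin (m+2) → D) t.succ)) *
              F ((Fin.cons x σ : Fin (m+2) → D) 0) ((Fin.cons x σ : Fin (m+2) → D) 0)
            = (v x * F x x) * (((P x) (σ 0) * ∏ t : Fin m, P (σ t.castSucc) (σ t.succ)) * 1) := by
          intro σ
          rw [prod_path_cons P m x σ]
          simp only [Fin.cons_zero]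
          ring
        rw [Finset.sum_congr rfl (fun σ _ => heq σ), ← Finset.mul_sum, key x, mul_one]
      rw [Finset.sum_congr rfl (fun x _ => lhs_eq x)]
      simp [Matrix.one_apply, mul_ite, mul_one, mul_zero, Finset.sum_ite_eq]
    · have key : ∀ x : D, (∑ σ : Fin (m+1) → D,
          ((P x) (σ 0) * ∏ t : Fin m, P (σ t.castSucc) (σ t.succ)) * F x (σ l))
          = ∑ a, ∑ b, P x a * (P ^ (l:ℕ)) a b * F x b := fun x => ih (P x) l (fun _ b => F x b)
      have lhs_eq : ∀ x : D, (∑ σ : Fin (m+1) → D,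
          (v ((Fin.cons x σ : Fin (m+2) → D) 0) *
            ∏ t : Fin (m+1), P ((Fin.cons x σ : Fin (m+2) → D) t.castSucc)
              ((Fin.cons x σ : Fin (m+2) → D) t.succ)) *
            F ((Fin.cons x σ : Fin (m+2) → D) 0) ((Fin.cons x σ : Fin (m+2) → D) l.succ))
          = v x * ∑ a, ∑ b, P x a * (P ^ (l:ℕ)) a b * F x b := by
        intro x
        rw [← key x, Finset.mul_sum]
        apply Finset.sum_congr rfl
        intro σ _
        rw [prod_path_cons P m x σ]
        simp only [Fin.cons_zero, Fin.cons_succ]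
        ring
      rw [Finset.sum_congr rfl (fun x _ => lhs_eq x)]
      apply Finset.sum_congr rfl
      intro x _
      have hpow : ∀ y, (P ^ ((l.succ : Fin (m+2)):ℕ)) x y = ∑ a, P x a * (P ^ (l:ℕ)) a y := by
        intro y
        rw [Fin.val_succ, pow_succ']
        simp [Matrix.mul_apply]
      simp only [hpow, Finset.mul_sum, Finset.sum_mul]
      rw [Finset.sum_comm]
      exact Finset.sum_congr rfl fun b _ => Finset.sum_congr rfl fun a _ => by ring

lemma lemD (π : D → ℝ) (P : Matrix D D ℝ) (hProw : ∀ x, ∑ y, P x y = 1)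
    (hstat : ∀ y, ∑ x, π x * P x y = π y) :
    ∀ (m : ℕ) (i j : Fin (m+1)), i ≤ j → ∀ (F : D → D → ℝ),
    (∑ ω : Fin (m+1) → D,
      (π (ω 0) * ∏ t : Fin m, P (ω t.castSucc) (ω t.succ)) * F (ω i) (ω j))
    = ∑ x, ∑ y, π x * (P ^ ((j:ℕ) - (i:ℕ))) x y * F x y := by
  intro m
  induction m with
  | zero =>
    intro i j hij F
    have hi : i = 0 := Fin.ext (by omega)
    have hj : j = 0 := Fin.ext (by omega)
    subst hi; subst hj
    simpa using lemC P hProw 0 π 0 F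
  | succ m ih =>
    intro i j hij F
    rcases Fin.eq_zero_or_eq_succ i with rfl | ⟨l, rfl⟩
    · simpa using lemC P hProw (m+1) π j F
    · rcases Fin.eq_zero_or_eq_succ j with rfl | ⟨r, rfl⟩
      · exact absurd hij (by simp [Fin.le_def, Fin.lt_def])
      · have hlr : l ≤ r := by rwa [Fin.succ_le_succ_iff] at hij
        rw [sum_path_cons (m+1)]
        have lhs_eq : ∀ x : D, (∑ σ : Fin (m+1) → D,
            (π ((Fin.cons x σ : Fin (m+2) → D) 0) *
              ∏ t : Fin (m+1), P ((Fin.cons x σ : Fin (m+2) → D) t.castSucc)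
                ((Fin.cons x σ : Fin (m+2) → D) t.succ)) *
              F ((Fin.cons x σ : Fin (m+2) → D) l.succ) ((Fin.cons x σ : Fin (m+2) → D) r.succ))
            = ∑ σ : Fin (m+1) → D,
              (π x * P x (σ 0)) *
                ((∏ t : Fin m, P (σ t.castSucc) (σ t.succ)) * F (σ l) (σ r)) := by
          intro x
          apply Finset.sum_congr rfl
          intro σ _
          rw [prod_path_cons P m x σ]
          simp only [Fin.cons_zero, Fin.cons_succ]
          ring
        rw [Finset.sum_congr rfl (fun x _ => lhs_eq x), Finset.sum_comm]
        have inner_eq : ∀ σ : Fin (m+1) → D,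
            (∑ x : D, (π x * P x (σ 0)) *
              ((∏ t : Fin m, P (σ t.castSucc) (σ t.succ)) * F (σ l) (σ r)))
            = (π (σ 0) * ∏ t : Fin m, P (σ t.castSucc) (σ t.succ)) * F (σ l) (σ r) := by
          intro σ
          rw [← Finset.sum_mul, hstat (σ 0)]
          ring
        rw [Finset.sum_congr rfl (fun σ _ => inner_eq σ), ih l r hlr F]
        congr 2
        simp [Fin.val_succ]

lemma pow_eig (P : Matrix D D ℝ) (u : D → ℝ) (β : ℝ) (h : P.mulVec u = β • u) (d : ℕ) :
    (P ^ d).mulVec u = (β ^ d) • u := by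
  induction d with
  | zero => simp
  | succ d ih =>
    rw [pow_succ', ← Matrix.mulVec_mulVec, ih, Matrix.mulVec_smul, h, smul_smul, pow_succ',
      mul_comm]

lemma completeness (π : D → ℝ) (u : Fin (Fintype.card D) → D → ℝ)
    (h_ortho : ∀ k l, ∑ x, u k x * u l x * π x = if k = l then (1 : ℝ) else 0) :
    ∀ x y, (∑ k, u k x * u k y * π x) = if x = y then (1:ℝ) else 0 := by
  classical
  set e := Fintype.equivFin D with he
  set A : Matrix (Fin (Fintype.card D)) (Fin (Fintype.card D)) ℝ :=
    fun k i => u k (e.symm i) with hA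
  set B : Matrix (Fin (Fintype.card D)) (Fin (Fintype.card D)) ℝ :=
    fun i k => u k (e.symm i) * π (e.symm i) with hB
  have hAB : A * B = 1 := by
    ext k l
    rw [Matrix.mul_apply]
    have hterm : ∀ i, A k i * B i l = (fun x => u k x * u l x * π x) (e.symm i) := by
      intro i; simp [hA, hB]; ring
    rw [Finset.sum_congr rfl (fun i _ => hterm i),
      Equiv.sum_comp e.symm (fun x => u k x * u l x * π x), h_ortho k l]
    simp [Matrix.one_apply]
  have hBA : B * A = 1 := mul_eq_one_comm.mp hAB
  intro x y
  have hval := congrFun (congrFun hBA (e x)) (e y)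
  rw [Matrix.mul_apply] at hval
  simp only [hA, hB, Equiv.symm_apply_apply, Matrix.one_apply] at hval
  calc ∑ k, u k x * u k y * π x = ∑ k, u k x * π x * u k y :=
        Finset.sum_congr rfl (fun k _ => by ring)
    _ = if e x = e y then 1 else 0 := hval
    _ = if x = y then 1 else 0 := by simp [Equiv.apply_eq_iff_eq]

end Aux

theorem stmt_16 {D : Type*} [Fintype D] [Nonempty D] [DecidableEq D]
    (π : D → ℝ) (hπpos : ∀ x, 0 < π x) (hπsum : ∑ x, π x = 1)
    (P : Matrix D D ℝ) (hPnonneg : ∀ x y, 0 ≤ P x y)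
    (hProw : ∀ x, ∑ y, P x y = 1)
    (hrev : ∀ x y, π x * P x y = π y * P y x)
    -- orthonormal eigen-decomposition with `u₀ ≡ 1`, `β₀ = 1`
    (u : Fin (Fintype.card D) → D → ℝ) (βs : Fin (Fintype.card D) → ℝ)
    (h_eig : ∀ k, P.mulVec (u k) = βs k • u k)
    (h_ortho : ∀ k l, ∑ x, u k x * u l x * π x = if k = l then (1 : ℝ) else 0)
    (h_b0 : ∀ k : Fin (Fintype.card D), (k : ℕ) = 0 → βs k = 1)
    (h_u0 : ∀ k : Fin (Fintype.card D), (k : ℕ) = 0 → u k = fun _ => 1)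
    (h_erg : ∀ k : Fin (Fintype.card D), (k : ℕ) ≠ 0 → |βs k| < 1)
    (n : ℕ) (hn : 0 < n) (f : D → ℝ) :
    -- expectation over paths of length n, started in the stationary distribution π,
    -- of |S_n(f) − S(f)|²
    (∑ ω : Fin n → D,
        (π (ω ⟨0, hn⟩) *
          ∏ i : Fin (n - 1),
            P (ω (Fin.cast (Nat.succ_pred_eq_of_pos hn) i.castSucc))
              (ω (Fin.cast (Nat.succ_pred_eq_of_pos hn) i.succ))) *
        ((1 / (n : ℝ)) * (∑ i, f (ω i)) - ∑ x, f x * π x) ^ 2)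
      = (1 / (n : ℝ) ^ 2) *
          ∑ k ∈ Finset.univ.filter (fun k : Fin (Fintype.card D) => (k : ℕ) ≠ 0),
            (∑ x, f x * u k x * π x) ^ 2 * Wfun n (βs k) := by
  classical
  obtain ⟨m, rfl⟩ : ∃ m, n = m + 1 := ⟨n - 1, by omega⟩
  -- clean up the casts (they are definitionally trivial)
  show (∑ ω : Fin (m+1) → D,
        (π (ω 0) * ∏ t : Fin m, P (ω t.castSucc) (ω t.succ)) *
        ((1 / ((m+1 : ℕ) : ℝ)) * (∑ i, f (ω i)) - ∑ x, f x * π x) ^ 2)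
      = (1 / ((m+1 : ℕ) : ℝ) ^ 2) *
          ∑ k ∈ Finset.univ.filter (fun k : Fin (Fintype.card D) => (k : ℕ) ≠ 0),
            (∑ x, f x * u k x * π x) ^ 2 * Wfun (m+1) (βs k)
  set S : ℝ := ∑ x, f x * π x with hS
  set ft : D → ℝ := fun x => f x - S with hft
  set a : Fin (Fintype.card D) → ℝ := fun k => ∑ x, f x * u k x * π x with ha
  set N : ℝ := ((m+1 : ℕ) : ℝ) with hN
  have hNne : N ≠ 0 := by positivity
  set k₀ : Fin (Fintype.card D) := ⟨0, Fintype.card_pos⟩ with hk₀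
  have hu0 : u k₀ = fun _ => 1 := h_u0 k₀ rfl
  -- stationarity
  have hstat : ∀ y, ∑ x, π x * P x y = π y := by
    intro y
    calc ∑ x, π x * P x y = ∑ x, π y * P y x := Finset.sum_congr rfl (fun x _ => hrev x y)
      _ = π y * ∑ x, P y x := (Finset.mul_sum _ _ _).symm
      _ = π y := by rw [hProw y, mul_one]
  -- completeness relation
  have hcomp := completeness π u h_ortho
  -- spectral decomposition of powers
  have hspec : ∀ (d : ℕ) (x y : D),
      (P ^ d) x y = ∑ k, βs k ^ d * u k x * (u k y * π y) := by
    intro d x y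
    have hmv : ∀ k, (∑ z, (P ^ d) x z * u k z) = βs k ^ d * u k x := by
      intro k
      have := congrFun (pow_eig P (u k) (βs k) (h_eig k) d) x
      simpa [Matrix.mulVec, dotProduct] using this
    calc (P ^ d) x y = ∑ z, (P ^ d) x z * (if y = z then 1 else 0) := by
          simp [mul_ite, Finset.sum_ite_eq]
      _ = ∑ z, (P ^ d) x z * ∑ k, u k y * u k z * π y :=
          Finset.sum_congr rfl (fun z _ => by rw [hcomp y z])
      _ = ∑ z, ∑ k, (u k y * π y) * ((P ^ d) x z * u k z) := by
          apply Finset.sum_congr rfl; intro z _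
          rw [Finset.mul_sum]; apply Finset.sum_congr rfl; intro k _; ring
      _ = ∑ k, ∑ z, (u k y * π y) * ((P ^ d) x z * u k z) := Finset.sum_comm
      _ = ∑ k, (u k y * π y) * (βs k ^ d * u k x) := by
          apply Finset.sum_congr rfl; intro k _
          rw [← Finset.mul_sum, hmv k]
      _ = ∑ k, βs k ^ d * u k x * (u k y * π y) :=
          Finset.sum_congr rfl (fun k _ => by ring)
  -- coefficients of ft
  have hb0 : (∑ x, ft x * u k₀ x * π x) = 0 := by
    simp only [hft, hu0]
    have hterm : ∀ x : D, (f x - S) * 1 * π x = f x * π x - S * π x := fun x => by ring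
    rw [Finset.sum_congr rfl (fun x _ => hterm x), Finset.sum_sub_distrib, ← Finset.mul_sum,
      hπsum, mul_one, ← hS, sub_self]
  have hbk : ∀ k, k ≠ k₀ → (∑ x, ft x * u k x * π x) = a k := by
    intro k hk
    have horth : (∑ x, u k x * π x) = 0 := by
      have := h_ortho k₀ k
      rw [if_neg (Ne.symm hk)] at this
      rw [← this]
      apply Finset.sum_congr rfl; intro x _
      rw [hu0]; ring
    calc ∑ x, ft x * u k x * π x
        = ∑ x, (f x * u k x * π x - S * (u k x * π x)) :=
          Finset.sum_congr rfl (fun x _ => by simp only [hft]; ring)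
      _ = (∑ x, f x * u k x * π x) - S * ∑ x, u k x * π x := by
          rw [Finset.sum_sub_distrib, Finset.mul_sum]
      _ = a k := by rw [horth, mul_zero, sub_zero]
  -- the key covariance identity
  have hE : ∀ d : ℕ,
      (∑ x, ∑ y, π x * (P ^ d) x y * (ft x * ft y))
        = ∑ k ∈ Finset.univ.filter (fun k : Fin (Fintype.card D) => (k : ℕ) ≠ 0),
            a k ^ 2 * βs k ^ d := by
    intro d
    have step1 : (∑ x, ∑ y, π x * (P ^ d) x y * (ft x * ft y))
        = ∑ k, βs k ^ d * ((∑ x, ft x * u k x * π x) * (∑ y, ft y * u k y * π y)) := by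
      calc (∑ x, ∑ y, π x * (P ^ d) x y * (ft x * ft y))
          = ∑ x, ∑ y, ∑ k, βs k ^ d * ((ft x * u k x * π x) * (ft y * u k y * π y)) := by
            apply Finset.sum_congr rfl; intro x _
            apply Finset.sum_congr rfl; intro y _
            rw [hspec d x y, Finset.mul_sum, Finset.sum_mul]
            apply Finset.sum_congr rfl; intro k _; ring
        _ = ∑ x, ∑ k, ∑ y, βs k ^ d * ((ft x * u k x * π x) * (ft y * u k y * π y)) :=
            Finset.sum_congr rfl (fun x _ => Finset.sum_comm)
        _ = ∑ k, ∑ x, ∑ y, βs k ^ d * ((ft x * u k x * π x) * (ft y * u k y * π y)) :=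
            Finset.sum_comm
        _ = ∑ k, βs k ^ d * ((∑ x, ft x * u k x * π x) * (∑ y, ft y * u k y * π y)) := by
            apply Finset.sum_congr rfl; intro k _
            rw [Finset.sum_mul_sum, Finset.mul_sum]
            apply Finset.sum_congr rfl; intro x _
            rw [Finset.mul_sum]
    rw [step1]
    rw [← Finset.sum_filter_add_sum_filter_not Finset.univ
      (fun k : Fin (Fintype.card D) => (k : ℕ) ≠ 0)]
    have hzero : (∑ k ∈ Finset.univ.filter
        (fun k : Fin (Fintype.card D) => ¬ (k : ℕ) ≠ 0),
        βs k ^ d * ((∑ x, ft x * u k x * π x) * (∑ y, ft y * u k y * π y))) = 0 := by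
      apply Finset.sum_eq_zero
      intro k hk
      simp only [Finset.mem_filter, not_not] at hk
      have : k = k₀ := Fin.ext (by rw [hk.2])
      subst this
      rw [hb0, zero_mul, mul_zero]
    rw [hzero, add_zero]
    apply Finset.sum_congr rfl
    intro k hk
    simp only [Finset.mem_filter] at hk
    have hkne : k ≠ k₀ := fun h => hk.2 (by rw [h])
    rw [hbk k hkne]
    ring
  -- marginalization to pairs
  have hmarg : ∀ i j : Fin (m+1),
      (∑ ω : Fin (m+1) → D,
        (π (ω 0) * ∏ t : Fin m, P (ω t.castSucc) (ω t.succ)) * (ft (ω i) * ft (ω j)))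
      = ∑ k ∈ Finset.univ.filter (fun k : Fin (Fintype.card D) => (k : ℕ) ≠ 0),
          a k ^ 2 * βs k ^ (Nat.dist i j) := by
    intro i j
    rcases le_total i j with hij | hji
    · rw [lemD π P hProw hstat m i j hij (fun x y => ft x * ft y)]
      rw [Nat.dist_eq_sub_of_le (show (i:ℕ) ≤ (j:ℕ) from hij)]
      exact hE _
    · have swap_eq : (∑ ω : Fin (m+1) → D,
          (π (ω 0) * ∏ t : Fin m, P (ω t.castSucc) (ω t.succ)) * (ft (ω i) * ft (ω j)))
          = ∑ ω : Fin (m+1) → D,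
          (π (ω 0) * ∏ t : Fin m, P (ω t.castSucc) (ω t.succ)) * (ft (ω j) * ft (ω i)) :=
        Finset.sum_congr rfl (fun ω _ => by ring)
      rw [swap_eq, lemD π P hProw hstat m j i hji (fun x y => ft x * ft y)]
      rw [Nat.dist_comm, Nat.dist_eq_sub_of_le (show (j:ℕ) ≤ (i:ℕ) from hji)]
      exact hE _
  -- expand the square
  have habs : ∀ ω : Fin (m+1) → D,
      ((1 / N) * (∑ i, f (ω i)) - S) ^ 2
        = (1 / N ^ 2) * ∑ i : Fin (m+1), ∑ j : Fin (m+1), ft (ω i) * ft (ω j) := by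
    intro ω
    have h1 : (1 / N) * (∑ i, f (ω i)) - S = (1 / N) * ∑ i : Fin (m+1), ft (ω i) := by
      simp only [hft, Finset.sum_sub_distrib, Finset.sum_const, Finset.card_univ,
        Fintype.card_fin, nsmul_eq_mul]
      rw [mul_sub]
      congr 1
      rw [← hN]
      field_simp
    rw [h1, mul_pow, sq (∑ i : Fin (m+1), ft (ω i)), Finset.sum_mul_sum]
    congr 1
    rw [div_pow, one_pow]
  -- put everything together
  calc (∑ ω : Fin (m+1) → D,
        (π (ω 0) * ∏ t : Fin m, P (ω t.castSucc) (ω t.succ)) *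
        ((1 / N) * (∑ i, f (ω i)) - S) ^ 2)
      = ∑ ω : Fin (m+1) → D, (1 / N ^ 2) * ∑ i : Fin (m+1), ∑ j : Fin (m+1),
          (π (ω 0) * ∏ t : Fin m, P (ω t.castSucc) (ω t.succ)) * (ft (ω i) * ft (ω j)) := by
        apply Finset.sum_congr rfl; intro ω _
        rw [habs ω, mul_left_comm]
        congr 1
        simp only [Finset.mul_sum]
    _ = (1 / N ^ 2) * ∑ ω : Fin (m+1) → D, ∑ i : Fin (m+1), ∑ j : Fin (m+1),
          (π (ω 0) * ∏ t : Fin m, P (ω t.castSucc) (ω t.succ)) * (ft (ω i) * ft (ω j)) :=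
        (Finset.mul_sum _ _ _).symm
    _ = (1 / N ^ 2) * ∑ i : Fin (m+1), ∑ j : Fin (m+1), ∑ ω : Fin (m+1) → D,
          (π (ω 0) * ∏ t : Fin m, P (ω t.castSucc) (ω t.succ)) * (ft (ω i) * ft (ω j)) := by
        congr 1
        rw [Finset.sum_comm]
        exact Finset.sum_congr rfl (fun i _ => Finset.sum_comm)
    _ = (1 / N ^ 2) * ∑ i : Fin (m+1), ∑ j : Fin (m+1),
          ∑ k ∈ Finset.univ.filter (fun k : Fin (Fintype.card D) => (k : ℕ) ≠ 0),
            a k ^ 2 * βs k ^ (Nat.dist i j) := by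
        congr 1
        exact Finset.sum_congr rfl (fun i _ => Finset.sum_congr rfl (fun j _ => hmarg i j))
    _ = (1 / N ^ 2) * ∑ k ∈ Finset.univ.filter (fun k : Fin (Fintype.card D) => (k : ℕ) ≠ 0),
          ∑ i : Fin (m+1), ∑ j : Fin (m+1), a k ^ 2 * βs k ^ (Nat.dist i j) := by
        congr 1
        calc (∑ i : Fin (m+1), ∑ j : Fin (m+1),
              ∑ k ∈ Finset.univ.filter (fun k : Fin (Fintype.card D) => (k : ℕ) ≠ 0),
                a k ^ 2 * βs k ^ (Nat.dist i j))
            = ∑ i : Fin (m+1),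
              ∑ k ∈ Finset.univ.filter (fun k : Fin (Fintype.card D) => (k : ℕ) ≠ 0),
                ∑ j : Fin (m+1), a k ^ 2 * βs k ^ (Nat.dist i j) :=
              Finset.sum_congr rfl (fun i _ => Finset.sum_comm)
          _ = ∑ k ∈ Finset.univ.filter (fun k : Fin (Fintype.card D) => (k : ℕ) ≠ 0),
                ∑ i : Fin (m+1), ∑ j : Fin (m+1), a k ^ 2 * βs k ^ (Nat.dist i j) :=
              Finset.sum_comm
    _ = (1 / N ^ 2) * ∑ k ∈ Finset.univ.filter (fun k : Fin (Fintype.card D) => (k : ℕ) ≠ 0),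
          a k ^ 2 * Wfun (m+1) (βs k) := by
        congr 1
        apply Finset.sum_congr rfl
        intro k hk
        simp only [Finset.mem_filter] at hk
        have hβne : βs k ≠ 1 := by
          have := h_erg k hk.2
          intro h; rw [h] at this; simp at this
        rw [← geom_dist_sum (βs k) hβne (m+1), Finset.mul_sum]
        apply Finset.sum_congr rfl; intro i _
        rw [Finset.mul_sum]
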